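/- Let 𝕋 = μℤ with μ > 0. The positive system x(t+μ) = (I+μA)x(t) + μBu(t) with x(t₀)=0 is positively reachable at time t₀ + kμ (every vector of ℝⁿ₊ is reachable with nonnegative controls) if and only if the matrix [B, (I+μA)B, …, (I+μA)^{k−1}B] contains an n×n monomial submatrix. -/

import Mathlib

open scoped Matrix Classical
open MeasureTheory

attribute [local instance] Matrix.linftyOpNormedRing Matrix.linftyOpNormedAlgebra

/-- A nonnegative square matrix is monomial: each row and each column contains
exactly one strictly positive entry, all other entries being zero. -/
def IsMonomial {n : ℕ} (A : Matrix (Fin n) (Fin n) ℝ) : Prop :=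
  (∀ i j, 0 ≤ A i j) ∧ (∀ i, ∃! j, 0 < A i j) ∧ (∀ j, ∃! i, 0 < A i j)

theorem positive_reachability_iff_monomial_submatrix (n m k : ℕ) (μ : ℝ) (hμ : 0 < μ)
    (A : Matrix (Fin n) (Fin n) ℝ) (B : Matrix (Fin n) (Fin m) ℝ)
    (hpos : ∀ i j, 0 ≤ (1 + μ • A) i j) (hB : ∀ i j, 0 ≤ B i j) :
    (∀ xbar : Fin n → ℝ, (∀ i, 0 ≤ xbar i) →
        ∃ u : ℕ → Fin m → ℝ, (∀ j i, 0 ≤ u j i) ∧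
          xbar = ∑ i ∈ Finset.range k,
            μ • ((1 + μ • A) ^ i).mulVec (B.mulVec (u (k - 1 - i)))) ↔
      ∃ (f : Fin n → Fin k × Fin m) (c : Fin n → ℝ), (∀ l, 0 < c l) ∧
        ∀ l, (((1 + μ • A) ^ ((f l).1 : ℕ)).mulVec fun p => B p (f l).2) =
          c l • (Pi.single l 1 : Fin n → ℝ) := by
  set M : Matrix (Fin n) (Fin n) ℝ := 1 + μ • A with hMdef
  have hpownn : ∀ (i : ℕ) (p q : Fin n), 0 ≤ (M ^ i) p q := by
    intro i
    induction i with
    | zero =>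
      intro p q
      simp only [pow_zero, Matrix.one_apply]
      split <;> norm_num
    | succ i ih =>
      intro p q
      rw [pow_succ, Matrix.mul_apply]
      exact Finset.sum_nonneg fun r _ => mul_nonneg (ih p r) (hpos r q)
  have hCnn : ∀ (i : ℕ) (p : Fin n) (j : Fin m), 0 ≤ (M ^ i * B) p j := by
    intro i p j
    rw [Matrix.mul_apply]
    exact Finset.sum_nonneg fun r _ => mul_nonneg (hpownn i p r) (hB r j)
  have hcol : ∀ (i : ℕ) (j : Fin m) (p : Fin n),
      ((M ^ i).mulVec fun q => B q j) p = (M ^ i * B) p j := by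
    intro i j p
    simp [Matrix.mulVec, dotProduct, Matrix.mul_apply]
  have hexp : ∀ (v : ℕ → Fin m → ℝ) (p : Fin n),
      (∑ i ∈ Finset.range k, μ • ((M ^ i).mulVec (B.mulVec (v (k - 1 - i))))) p
        = ∑ i ∈ Finset.range k, ∑ j, μ * ((M ^ i * B) p j * v (k - 1 - i) j) := by
    intro v p
    rw [Finset.sum_apply]
    refine Finset.sum_congr rfl fun i _ => ?_
    rw [Pi.smul_apply, Matrix.mulVec_mulVec]
    simp [Matrix.mulVec, dotProduct, Finset.mul_sum]
  constructor
  · intro h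
    have key : ∀ l : Fin n, ∃ (i : Fin k) (j : Fin m),
        0 < (M ^ (i : ℕ) * B) l j ∧ ∀ p, p ≠ l → (M ^ (i : ℕ) * B) p j = 0 := by
      intro l
      obtain ⟨u, hu, hsum⟩ := h (Pi.single l 1) (by
        intro i
        rcases eq_or_ne i l with rfl | hne
        · simp
        · simp [Pi.single_eq_of_ne hne])
      have hl : (1 : ℝ) = ∑ i ∈ Finset.range k, ∑ j,
          μ * ((M ^ i * B) l j * u (k - 1 - i) j) := by
        have := congrFun hsum l
        rwa [hexp, Pi.single_eq_same] at this
      have hterm_nn : ∀ (p : Fin n) (i : ℕ) (j : Fin m),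
          0 ≤ μ * ((M ^ i * B) p j * u (k - 1 - i) j) :=
        fun p i j => mul_nonneg hμ.le (mul_nonneg (hCnn i p j) (hu _ j))
      -- find a positive term
      have hex : ∃ i ∈ Finset.range k, ∃ j : Fin m,
          0 < μ * ((M ^ i * B) l j * u (k - 1 - i) j) := by
        by_contra hcon
        push_neg at hcon
        have : (1 : ℝ) ≤ 0 := by
          rw [hl]
          refine Finset.sum_nonpos fun i hi => Finset.sum_nonpos fun j _ => hcon i hi j
        linarith
      obtain ⟨i, hik, j, hij⟩ := hex
      have hik' : i < k := Finset.mem_range.mp hik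
      have hClj : 0 < (M ^ i * B) l j := by
        rcases (hCnn i l j).lt_or_eq with h' | h'
        · exact h'
        · exfalso; rw [← h'] at hij; simp at hij
      have huj : 0 < u (k - 1 - i) j := by
        rcases (hu (k - 1 - i) j).lt_or_eq with h' | h'
        · exact h'
        · exfalso; rw [← h'] at hij; simp at hij
      refine ⟨⟨i, hik'⟩, j, hClj, ?_⟩
      intro p hp
      have hp0 : (0 : ℝ) = ∑ i ∈ Finset.range k, ∑ j,
          μ * ((M ^ i * B) p j * u (k - 1 - i) j) := by
        have := congrFun hsum p
        rwa [hexp, Pi.single_eq_of_ne hp] at this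
      have hall := (Finset.sum_eq_zero_iff_of_nonneg
        (fun i _ => Finset.sum_nonneg fun j _ => hterm_nn p i j)).mp hp0.symm i hik
      have hone := (Finset.sum_eq_zero_iff_of_nonneg
        (fun j _ => hterm_nn p i j)).mp hall j (Finset.mem_univ j)
      have : (M ^ i * B) p j * u (k - 1 - i) j = 0 := by
        rcases mul_eq_zero.mp hone with h' | h'
        · exact absurd h' hμ.ne'
        · exact h'
      rcases mul_eq_zero.mp this with h' | h'
      · exact h'
      · exact absurd h' huj.ne'
    choose i j hCpos hCzero using key
    refine ⟨fun l => (i l, j l), fun l => (M ^ ((i l : ℕ)) * B) l (j l),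
      fun l => hCpos l, fun l => ?_⟩
    funext p
    rw [hcol]
    rcases eq_or_ne p l with rfl | hp
    · simp
    · simp [hCzero l p hp, Pi.single_eq_of_ne hp]
  · rintro ⟨f, c, hc, hf⟩
    intro xbar hx
    have hfC : ∀ (l : Fin n) (p : Fin n),
        (M ^ ((f l).1 : ℕ) * B) p (f l).2 = c l * (Pi.single l 1 : Fin n → ℝ) p := by
      intro l p
      rw [← hcol]
      rw [hf l]
      simp
    set u : ℕ → Fin m → ℝ := fun t j => ∑ l : Fin n,
      if k - 1 - ((f l).1 : ℕ) = t ∧ (f l).2 = j then xbar l / (μ * c l) else 0 with hu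
    refine ⟨u, ?_, ?_⟩
    · intro t j
      refine Finset.sum_nonneg fun l _ => ?_
      split
      · exact div_nonneg (hx l) (mul_nonneg hμ.le (hc l).le)
      · exact le_refl 0
    · funext p
      rw [hexp u p, hu]
      simp only []
      have step1 : ∀ i ∈ Finset.range k, ∑ j, μ * ((M ^ i * B) p j *
            (∑ l : Fin n, if k - 1 - ((f l).1 : ℕ) = k - 1 - i ∧ (f l).2 = j
              then xbar l / (μ * c l) else 0))
          = ∑ j, ∑ l : Fin n, if (f l).2 = j ∧ ((f l).1 : ℕ) = i
              then μ * ((M ^ i * B) p j * (xbar l / (μ * c l))) else 0 := by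
        intro i hi
        have hik : i < k := Finset.mem_range.mp hi
        refine Finset.sum_congr rfl fun j _ => ?_
        rw [Finset.mul_sum, Finset.mul_sum]
        refine Finset.sum_congr rfl fun l _ => ?_
        have hcond : (k - 1 - ((f l).1 : ℕ) = k - 1 - i ∧ (f l).2 = j)
            ↔ ((f l).2 = j ∧ ((f l).1 : ℕ) = i) := by
          have hlt : ((f l).1 : ℕ) < k := (f l).1.isLt
          constructor
          · rintro ⟨h1, h2⟩; exact ⟨h2, by omega⟩
          · rintro ⟨h1, h2⟩; exact ⟨by omega, h1⟩
        rw [if_congr hcond rfl rfl]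
        split <;> simp
      rw [Finset.sum_congr rfl step1]
      have step3 : ∀ l : Fin n, ∑ i ∈ Finset.range k, ∑ j : Fin m,
          (if (f l).2 = j ∧ ((f l).1 : ℕ) = i
            then μ * ((M ^ i * B) p j * (xbar l / (μ * c l))) else 0)
          = μ * ((M ^ ((f l).1 : ℕ) * B) p (f l).2 * (xbar l / (μ * c l))) := by
        intro l
        simp only [ite_and]
        simp [Finset.sum_ite_eq, (f l).1.isLt]
      rw [Finset.sum_congr rfl fun i _ => Finset.sum_comm, Finset.sum_comm]
      rw [Finset.sum_congr rfl fun l _ => step3 l]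
      simp only [hfC, Pi.single_apply, mul_ite, ite_mul, mul_zero, zero_mul, mul_one]
      rw [Finset.sum_ite_eq]
      simp only [Finset.mem_univ, if_true]
      field_simp
      rw [eq_div_iff (hc p).ne']
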